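/- Let a, b ∈ [0,1] and let ρ = (1/4)(I₄ − a·(σ₁⊗σ₁ + σ₂⊗σ₂) − b·σ₃⊗σ₃). Then ρ is Hermitian, its eigenvalues are (1 + 2a + b)/4, (1 − b)/4 (with multiplicity two), and (1 − 2a + b)/4, and its largest eigenvalue is τ = (1 + 2a + b)/4. In particular, for a = 2^{1−i}·∏_{k=1}^{i−1}(1+√(1−λ_k²))/2 and b = ∏_{k=1}^{i−1}√(1−λ_k²) with λ_k ∈ [0,1], the largest eigenvalue of the shared state before the i-th measurement is τ^i = (1/4)[1 + ∏_{k=1}^{i−1}√(1−λ_k²) + 2^{2−i}·∏_{k=1}^{i−1}(1+√(1−λ_k²))]. -/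

import Mathlib

open Matrix
open Kronecker
open Polynomial

noncomputable section

/-- The first Pauli matrix. -/
def sigma1 : Matrix (Fin 2) (Fin 2) ℂ := !![0, 1; 1, 0]

/-- The second Pauli matrix. -/
def sigma2 : Matrix (Fin 2) (Fin 2) ℂ := !![0, -Complex.I; Complex.I, 0]

/-- The third Pauli matrix. -/
def sigma3 : Matrix (Fin 2) (Fin 2) ℂ := !![1, 0; 0, -1]

/-- The Bell-diagonal state ρ = (1/4)(I₄ − a (σ₁⊗σ₁ + σ₂⊗σ₂) − b σ₃⊗σ₃). -/
def bdState (a b : ℝ) : Matrix (Fin 2 × Fin 2) (Fin 2 × Fin 2) ℂ :=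
  ((1/4 : ℝ) : ℂ) • ((1 : Matrix (Fin 2 × Fin 2) (Fin 2 × Fin 2) ℂ)
    - (a : ℂ) • (sigma1 ⊗ₖ sigma1 + sigma2 ⊗ₖ sigma2) - (b : ℂ) • (sigma3 ⊗ₖ sigma3))


def bdMat (a b : ℝ) : Matrix (Fin 4) (Fin 4) ℂ :=
  !![(((1-b)/4 : ℝ) : ℂ), 0, 0, 0;
     0, (((1+b)/4 : ℝ) : ℂ), ((-(a/2) : ℝ) : ℂ), 0;
     0, ((-(a/2) : ℝ) : ℂ), (((1+b)/4 : ℝ) : ℂ), 0;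
     0, 0, 0, (((1-b)/4 : ℝ) : ℂ)]

def myE : Fin 2 × Fin 2 ≃ Fin 4 :=
  ⟨fun p => ⟨2 * p.1.val + p.2.val, by omega⟩,
   fun k => (⟨k.val / 2, by omega⟩, ⟨k.val % 2, by omega⟩),
   by decide, by decide⟩

lemma bd_eq (a b : ℝ) : bdState a b = (bdMat a b).submatrix myE myE := by
  ext i j
  fin_cases i <;> fin_cases j <;>
    simp [bdState, bdMat, myE, sigma1, sigma2, sigma3, Matrix.one_apply, Prod.ext_iff,
      Matrix.vecHead, Matrix.vecTail] <;>
    first | rfl | (push_cast; ring_nf) | (simp [Complex.ext_iff]; ring_nf)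

lemma bdMat_herm (a b : ℝ) : (bdMat a b).IsHermitian := by
  unfold Matrix.IsHermitian
  ext i j
  fin_cases i <;> fin_cases j <;>
    simp [bdMat, Matrix.conjTranspose_apply] <;>
    first | rfl | simp [Matrix.vecHead, Matrix.vecTail]

lemma bd_charpoly (a b : ℝ) : (bdState a b).charpoly = (bdMat a b).charpoly := by
  rw [bd_eq]
  rw [← Matrix.charpoly_reindex myE ((bdMat a b).submatrix myE myE)]
  congr 1
  ext i j
  simp

lemma bdMat_charpoly (a b : ℝ) : (bdMat a b).charpoly
    = (X - C (((1 + 2*a + b)/4 : ℝ) : ℂ)) * (X - C (((1 - b)/4 : ℝ) : ℂ))^2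
          * (X - C (((1 - 2*a + b)/4 : ℝ) : ℂ)) := by
  rw [Matrix.charpoly]
  simp [Matrix.det_succ_row_zero, Fin.sum_univ_succ, Matrix.charmatrix_apply, bdMat,
    Matrix.one_apply, Matrix.diagonal_apply, Fin.val_succ]
  apply Polynomial.funext
  intro x
  simp
  push_cast
  ring

theorem bd_state_eigenvalues (a b : ℝ) (ha : a ∈ Set.Icc (0:ℝ) 1)
    (hb : b ∈ Set.Icc (0:ℝ) 1) :
    (bdState a b).IsHermitian ∧
    (bdState a b).charpoly
      = (X - C (((1 + 2*a + b)/4 : ℝ) : ℂ)) * (X - C (((1 - b)/4 : ℝ) : ℂ))^2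
          * (X - C (((1 - 2*a + b)/4 : ℝ) : ℂ)) ∧
    (1 - b)/4 ≤ (1 + 2*a + b)/4 ∧ (1 - 2*a + b)/4 ≤ (1 + 2*a + b)/4 ∧
    (∀ (n : ℕ) (lam : Fin n → ℝ), (∀ k, lam k ∈ Set.Icc (0:ℝ) 1) →
      a = (∏ k, (1 + Real.sqrt (1 - lam k ^ 2))) / 2 ^ n →
      b = ∏ k, Real.sqrt (1 - lam k ^ 2) →
      (1 + 2*a + b)/4
        = (1/4) * (1 + (∏ k, Real.sqrt (1 - lam k ^ 2))
            + (2:ℝ) ^ (1 - (n:ℤ)) * ∏ k, (1 + Real.sqrt (1 - lam k ^ 2)))) := by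
  obtain ⟨ha0, ha1⟩ := ha
  obtain ⟨hb0, hb1⟩ := hb
  refine ⟨?_, ?_, by linarith, by linarith, ?_⟩
  · rw [Matrix.IsHermitian, bd_eq, Matrix.conjTranspose_submatrix, bdMat_herm]
  · rw [bd_charpoly, bdMat_charpoly]
  · intro n lam hlam han hbn
    have h2 : (2:ℝ) ^ (1 - (n:ℤ)) = 2 / 2 ^ n := by
      rw [zpow_sub₀ (by norm_num), zpow_one, zpow_natCast]
    rw [han, hbn, h2]
    have : (2:ℝ) ^ n ≠ 0 := by positivity
    field_simp
    ring

end
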